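/- Let f₀(x) = ½xᵀQ₀x + q₀ᵀx + c₀ with Q₀ symmetric positive semidefinite, and let constraint functions f_i (i = 1,…,k) be convex quadratics with PSD Hessians, A ∈ ℝ^{m×n}, b ∈ ℝ^m. Suppose x* with ‖x*‖₀ = s is a P-stationary point: there exist multipliers (ν*, μ*, λ*) with μ* ≥ 0, λ* ≥ 0, complementarity μ*_i f_i(x*) = 0 and ⟨λ*, Ax* − b⟩ = 0, feasibility f_i(x*) ≤ 0 and Ax* ≤ b, ν*_j = 0 off the support Γ of x*, the gradient condition (∇f₀(x*) + Σμ*_i∇f_i(x*) + Aᵀλ* + ν*)_Γ = 0, and ν*_Γ lies in the normal cone of a product of intervals 𝕏_Γ at x*_Γ. Then x* is a local minimizer of f₀ over {x : f_i(x) ≤ 0, Ax ≤ b, ‖x‖₀ ≤ s, x ∈ 𝕏}: there is r > 0 such that f₀(x*) ≤ f₀(x) for all feasible x with ‖x − x*‖ < r. -/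

import Mathlib

open Matrix

/-- The quadratic function `x ↦ ½xᵀQx + qᵀx + c`. -/
noncomputable def quadFun {n : ℕ} (Q : Matrix (Fin n) (Fin n) ℝ) (q : Fin n → ℝ) (c : ℝ)
    (x : Fin n → ℝ) : ℝ :=
  (1 / 2) * (x ⬝ᵥ Q.mulVec x) + q ⬝ᵥ x + c

/-- Gradient inequality for a convex (PSD Hessian) quadratic. -/
lemma quad_lb {n : ℕ} {Q : Matrix (Fin n) (Fin n) ℝ} (hQ : Q.PosSemidef)
    (q : Fin n → ℝ) (c : ℝ) (x y : Fin n → ℝ) :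
    quadFun Q q c y + ∑ j, (Q.mulVec y j + q j) * (x j - y j) ≤ quadFun Q q c x := by
  have hsym : x ⬝ᵥ Q.mulVec y = y ⬝ᵥ Q.mulVec x := by
    rw [Matrix.dotProduct_mulVec, ← Matrix.mulVec_transpose]
    rw [show Qᵀ = Q from hQ.1]
    exact dotProduct_comm _ _
  have key : 0 ≤ (x - y) ⬝ᵥ Q.mulVec (x - y) := by
    have := hQ.dotProduct_mulVec_nonneg (x - y)
    simpa using this
  have hexp : (x - y) ⬝ᵥ Q.mulVec (x - y)
      = x ⬝ᵥ Q.mulVec x - x ⬝ᵥ Q.mulVec y - y ⬝ᵥ Q.mulVec x + y ⬝ᵥ Q.mulVec y := by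
    simp [Matrix.mulVec_sub, sub_dotProduct, dotProduct_sub]
    ring
  have hdot : ∑ j, (Q.mulVec y j + q j) * (x j - y j)
      = x ⬝ᵥ Q.mulVec y - y ⬝ᵥ Q.mulVec y + q ⬝ᵥ x - q ⬝ᵥ y := by
    simp only [dotProduct]
    rw [← Finset.sum_sub_distrib, ← Finset.sum_add_distrib, ← Finset.sum_sub_distrib]
    exact Finset.sum_congr rfl fun j _ => by ring
  simp only [quadFun]
  rw [hdot]
  nlinarith [key, hexp, hsym]

/-- First-order sufficient condition for SQCQP: a P-stationary point `x*` with full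
sparsity `‖x*‖₀ = s`, for convex quadratic objective and constraints (PSD Hessians),
linear constraints `Ax ≤ b`, and box set `𝕏 = Π_i X_i`, is a local minimizer of the
sparse QCQP: there is `r > 0` such that `f₀(x*) ≤ f₀(x)` for all feasible `x` with
`‖x − x*‖ < r`. -/
theorem pstationary_local_min {n k m s : ℕ}
    (Q0 : Matrix (Fin n) (Fin n) ℝ) (q0 : Fin n → ℝ) (c0 : ℝ) (hQ0 : Q0.PosSemidef)
    (Q : Fin k → Matrix (Fin n) (Fin n) ℝ) (q : Fin k → Fin n → ℝ) (c : Fin k → ℝ)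
    (hQ : ∀ i, (Q i).PosSemidef)
    (A : Matrix (Fin m) (Fin n) ℝ) (b : Fin m → ℝ)
    (X : Fin n → Set ℝ) (hX : ∀ i, Convex ℝ (X i)) (hX0 : ∀ i, (0 : ℝ) ∈ X i)
    (xs : Fin n → ℝ) (ν : Fin n → ℝ) (μ : Fin k → ℝ) (lam : Fin m → ℝ)
    (hsupp : (Finset.univ.filter fun i => xs i ≠ 0).card = s)
    (hμ : ∀ i, 0 ≤ μ i) (hlam : ∀ j, 0 ≤ lam j)
    (hcompμ : ∀ i, μ i * quadFun (Q i) (q i) (c i) xs = 0)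
    (hcomplam : ∑ j, lam j * (A.mulVec xs j - b j) = 0)
    (hfeasq : ∀ i, quadFun (Q i) (q i) (c i) xs ≤ 0)
    (hfeasA : ∀ j, A.mulVec xs j ≤ b j)
    (hfeasX : ∀ i, xs i ∈ X i)
    (hνoff : ∀ j, xs j = 0 → ν j = 0)
    (hgrad : ∀ j, xs j ≠ 0 →
      Q0.mulVec xs j + q0 j + (∑ i, μ i * ((Q i).mulVec xs j + q i j))
        + A.transpose.mulVec lam j + ν j = 0)
    (hnormal : ∀ j, xs j ≠ 0 → ∀ t ∈ X j, ν j * (t - xs j) ≤ 0) :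
    ∃ r > (0 : ℝ), ∀ x : Fin n → ℝ,
      (∀ i, quadFun (Q i) (q i) (c i) x ≤ 0) →
      (∀ j, A.mulVec x j ≤ b j) →
      (Finset.univ.filter fun i => x i ≠ 0).card ≤ s →
      (∀ i, x i ∈ X i) →
      Real.sqrt (∑ i, (x i - xs i) ^ 2) < r →
      quadFun Q0 q0 c0 xs ≤ quadFun Q0 q0 c0 x := by
  classical
  set Γ : Finset (Fin n) := Finset.univ.filter fun i => xs i ≠ 0 with hΓdef
  set r : ℝ := if h : Γ.Nonempty then Γ.inf' h (fun i => |xs i|) else 1 with hrdef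
  have hrpos : 0 < r := by
    rw [hrdef]
    split
    · rename_i h
      rw [Finset.lt_inf'_iff]
      intro i hi
      have : xs i ≠ 0 := by simpa [hΓdef] using hi
      exact abs_pos.mpr this
    · norm_num
  have hrle : ∀ i ∈ Γ, r ≤ |xs i| := by
    intro i hi
    rw [hrdef, dif_pos ⟨i, hi⟩]
    exact Finset.inf'_le _ hi
  refine ⟨r, hrpos, ?_⟩
  intro x hfq hfA hcard hxX hclose
  -- support of x equals Γ
  have habs : ∀ i, |x i - xs i| ≤ Real.sqrt (∑ i, (x i - xs i) ^ 2) := by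
    intro i
    rw [← Real.sqrt_sq_eq_abs]
    apply Real.sqrt_le_sqrt
    exact Finset.single_le_sum (f := fun j => (x j - xs j) ^ 2)
      (fun j _ => sq_nonneg _) (Finset.mem_univ i)
  have hsub : Γ ⊆ Finset.univ.filter fun i => x i ≠ 0 := by
    intro i hi
    simp only [Finset.mem_filter, Finset.mem_univ, true_and]
    intro hxi
    have h1 : |xs i| ≤ Real.sqrt (∑ i, (x i - xs i) ^ 2) := by
      have := habs i
      rwa [hxi, zero_sub, abs_neg] at this
    exact absurd (lt_of_le_of_lt h1 hclose) (not_lt.mpr (hrle i hi))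
  have hsuppeq : Γ = Finset.univ.filter fun i => x i ≠ 0 :=
    Finset.eq_of_subset_of_card_le hsub (hcard.trans hsupp.ge)
  have hx0 : ∀ j, xs j = 0 → x j = 0 := by
    intro j hj
    by_contra h
    have : j ∈ Γ := by rw [hsuppeq]; simp [h]
    have h2 : xs j ≠ 0 := by simpa [hΓdef] using this
    exact h2 hj
  -- the gradient of the Lagrangian
  set g : Fin n → ℝ := fun j => Q0.mulVec xs j + q0 j
      + (∑ i, μ i * ((Q i).mulVec xs j + q i j)) + A.transpose.mulVec lam j with hg
  have hT : 0 ≤ ∑ j, g j * (x j - xs j) := by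
    apply Finset.sum_nonneg
    intro j _
    by_cases hj : xs j = 0
    · rw [hx0 j hj, hj]; simp
    · have h1 : g j = -ν j := by
        simp only [hg]
        linarith [hgrad j hj]
      rw [h1]
      nlinarith [hnormal j hj (x j) (hxX j)]
  -- convexity bounds
  have h0 := quad_lb hQ0 q0 c0 x xs
  have hsumi : ∑ i, μ i * ∑ j, ((Q i).mulVec xs j + q i j) * (x j - xs j)
      ≤ ∑ i, μ i * quadFun (Q i) (q i) (c i) x := by
    apply Finset.sum_le_sum
    intro i _
    have h1 := mul_le_mul_of_nonneg_left (quad_lb (hQ i) (q i) (c i) x xs) (hμ i)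
    rw [mul_add, hcompμ i, zero_add] at h1
    exact h1
  -- linear part: exact first-order expansion
  have hlin : ∑ j, lam j * (A.mulVec x j - b j)
      = ∑ p, A.transpose.mulVec lam p * (x p - xs p) := by
    have hswap : ∑ p, A.transpose.mulVec lam p * (x p - xs p)
        = ∑ j, ∑ p, A j p * lam j * (x p - xs p) := by
      simp only [mulVec, dotProduct, transpose_apply, Finset.sum_mul]
      rw [Finset.sum_comm]
    have hstep : ∑ j, lam j * (A.mulVec x j - b j)
        = ∑ j, lam j * (A.mulVec xs j - b j) + ∑ j, ∑ p, A j p * lam j * (x p - xs p) := by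
      rw [← Finset.sum_add_distrib]
      apply Finset.sum_congr rfl
      intro j _
      simp only [mulVec, dotProduct]
      have h1 : ∑ p, A j p * lam j * (x p - xs p)
          = lam j * ∑ p, A j p * x p - lam j * ∑ p, A j p * xs p := by
        rw [Finset.mul_sum, Finset.mul_sum, ← Finset.sum_sub_distrib]
        exact Finset.sum_congr rfl fun p _ => by ring
      rw [h1]; ring
    rw [hstep, hcomplam, zero_add, hswap]
  -- decompose the gradient dot product
  have hgdot : ∑ j, g j * (x j - xs j)
      = (∑ j, (Q0.mulVec xs j + q0 j) * (x j - xs j))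
        + (∑ i, μ i * ∑ j, ((Q i).mulVec xs j + q i j) * (x j - xs j))
        + ∑ p, A.transpose.mulVec lam p * (x p - xs p) := by
    have hmid : ∑ j, (∑ i, μ i * ((Q i).mulVec xs j + q i j)) * (x j - xs j)
        = ∑ i, μ i * ∑ j, ((Q i).mulVec xs j + q i j) * (x j - xs j) := by
      simp only [Finset.sum_mul]
      rw [Finset.sum_comm]
      exact Finset.sum_congr rfl fun i _ => by
        rw [Finset.mul_sum]
        exact Finset.sum_congr rfl fun j _ => by ring
    rw [← hmid, ← Finset.sum_add_distrib, ← Finset.sum_add_distrib]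
    exact Finset.sum_congr rfl fun j _ => by rw [hg]; ring
  -- nonpositivity of the added terms
  have hμf : ∑ i, μ i * quadFun (Q i) (q i) (c i) x ≤ 0 :=
    Finset.sum_nonpos fun i _ => mul_nonpos_iff.mpr (Or.inl ⟨hμ i, hfq i⟩)
  have hlamf : ∑ j, lam j * (A.mulVec x j - b j) ≤ 0 :=
    Finset.sum_nonpos fun j _ => mul_nonpos_iff.mpr (Or.inl ⟨hlam j, sub_nonpos.mpr (hfA j)⟩)
  linarith [h0, hsumi, hlin, hgdot, hT, hμf, hlamf]
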